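/- Let N > n ≥ 1 and let x : Fin N → EuclideanSpace ℝ (Fin n) be a non-degenerate configuration. Then there exist at least N - n distinct subsets S : Finset (Fin N) with S.card = n + 1 such that affineSpan ℝ (x '' ↑S) = ⊤; that is, the collection {S : Finset (Fin N) | S.card = n + 1 ∧ affineSpan ℝ (x '' ↑S) = ⊤} has at least N - n elements. -/

import Mathlib

open Finset

-- Exchange lemma
lemma exchange_lemma {N n : ℕ} (x : Fin N → EuclideanSpace ℝ (Fin n)) (T : Finset (Fin N))
    (hind : AffineIndependent ℝ (fun j : T => x j))
    (hspan : affineSpan ℝ (x '' ↑T) = ⊤)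
    (i : Fin N) (hi : i ∉ T) :
    ∃ S : Finset (Fin N), i ∈ S ∧ S ⊆ insert i T ∧ S.card = T.card ∧
      affineSpan ℝ (x '' ↑S) = ⊤ := by
  classical
  have hrangeT : Set.range (fun j : T => x j) = x '' ↑T := by
    ext y; simp
  let b : AffineBasis T ℝ (EuclideanSpace ℝ (Fin n)) :=
    ⟨fun j => x j, hind, by rw [hrangeT]; exact hspan⟩
  set W : Fin N → ℝ := fun k => if h : k ∈ T then b.coord ⟨k, h⟩ (x i) else 0 with hWdef
  have hW1 : ∑ k ∈ T, W k = 1 := by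
    rw [← Finset.sum_attach T W]
    have := b.sum_coord_apply_eq_one (x i)
    rw [Finset.univ_eq_attach] at this
    rw [← this]
    apply Finset.sum_congr rfl
    intro j _
    simp [hWdef, j.2]
  have hWx : ∑ k ∈ T, W k • x k = x i := by
    rw [← Finset.sum_attach T (fun k => W k • x k)]
    have := b.linear_combination_coord_eq_self (x i)
    rw [Finset.univ_eq_attach] at this
    rw [← this]
    apply Finset.sum_congr rfl
    intro j _
    simp [hWdef, j.2]
    rfl
  have hex : ∃ j0 ∈ T, W j0 ≠ 0 := by
    by_contra h
    push_neg at h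
    have : ∑ k ∈ T, W k = 0 := Finset.sum_eq_zero h
    rw [hW1] at this; norm_num at this
  obtain ⟨j0, hj0T, hj0⟩ := hex
  set c := W j0 with hc
  refine ⟨insert i (T.erase j0), Finset.mem_insert_self _ _, ?_, ?_, ?_⟩
  · intro k hk
    rcases Finset.mem_insert.1 hk with h | h
    · exact Finset.mem_insert.2 (Or.inl h)
    · exact Finset.mem_insert.2 (Or.inr (Finset.mem_of_mem_erase h))
  · rw [Finset.card_insert_of_notMem (fun h => hi (Finset.mem_of_mem_erase h)),
      Finset.card_erase_of_mem hj0T]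
    have : 1 ≤ T.card := Finset.card_pos.2 ⟨j0, hj0T⟩
    omega
  · set S := insert i (T.erase j0) with hS
    have hiS : i ∉ T.erase j0 := fun h => hi (Finset.mem_of_mem_erase h)
    set v : Fin N → ℝ := fun k => if k = i then c⁻¹ else -(W k) * c⁻¹ with hv
    have herase : ∑ k ∈ T.erase j0, W k = 1 - c := by
      have := Finset.add_sum_erase T W hj0T
      rw [hW1] at this
      linarith
    have hv1 : ∑ k ∈ S, v k = 1 := by
      rw [hS, Finset.sum_insert hiS]
      have : ∑ k ∈ T.erase j0, v k = ∑ k ∈ T.erase j0, -(W k) * c⁻¹ := by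
        apply Finset.sum_congr rfl
        intro k hk
        have : k ≠ i := fun h => hiS (h ▸ hk)
        simp [hv, this]
      rw [this, hv]
      simp only [if_pos rfl, eq_self_iff_true, if_true]
      rw [Finset.sum_congr rfl (fun k _ => (neg_mul (W k) c⁻¹)), Finset.sum_neg_distrib,
        ← Finset.sum_mul, herase]
      field_simp
      ring
    have hvx : ∑ k ∈ S, v k • x k = x j0 := by
      rw [hS, Finset.sum_insert hiS]
      have h1 : ∑ k ∈ T.erase j0, v k • x k = ∑ k ∈ T.erase j0, (-(W k) * c⁻¹) • x k := by
        apply Finset.sum_congr rfl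
        intro k hk
        have : k ≠ i := fun h => hiS (h ▸ hk)
        simp [hv, this]
      have h2 : x i = c • x j0 + ∑ k ∈ T.erase j0, W k • x k := by
        rw [← hWx, ← Finset.add_sum_erase T (fun k => W k • x k) hj0T]
      rw [h1]
      simp only [hv, if_pos rfl]
      have h3 : ∀ k, (-(W k) * c⁻¹) • x k = -(c⁻¹ • (W k • x k)) := by
        intro k
        rw [neg_mul, neg_smul, mul_comm, mul_smul]
      rw [Finset.sum_congr rfl (fun k _ => h3 k), Finset.sum_neg_distrib, ← Finset.smul_sum,
        ← sub_eq_add_neg, ← smul_sub, h2]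
      have : c • x j0 + ∑ k ∈ T.erase j0, W k • x k - ∑ k ∈ T.erase j0, W k • x k = c • x j0 := by
        abel
      rw [this, smul_smul, inv_mul_cancel₀ hj0, one_smul]
    -- now prove the span
    rw [eq_top_iff, ← hspan]
    apply affineSpan_le.2
    intro y hy
    obtain ⟨j, hjT, rfl⟩ := hy
    rcases eq_or_ne j j0 with rfl | hjne
    · -- x j0 ∈ affineSpan (x '' S)
      have hv1' : ∑ k ∈ S.attach, v ↑k = 1 := by rw [Finset.sum_attach]; exact hv1
      have hmem := affineCombination_mem_affineSpan (k := ℝ) hv1' (fun k : S => x ↑k)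
      have heq : S.attach.affineCombination ℝ (fun k : S => x ↑k) (fun k => v ↑k)
          = ∑ k ∈ S, v k • x k := by
        rw [Finset.affineCombination_eq_linear_combination _ _ _ hv1']
        exact Finset.sum_attach S (fun k => v k • x k)
      rw [heq, hvx] at hmem
      have hrangeS : Set.range (fun k : S => x ↑k) = x '' ↑S := by ext y; simp
      rwa [hrangeS] at hmem
    · apply subset_affineSpan
      exact ⟨j, by simp [hS, Finset.mem_erase, hjne, hjT], rfl⟩

theorem card_nondegenerate_subconfigurations {N n : ℕ} (hn : 1 ≤ n) (hN : n < N)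
    (x : Fin N → EuclideanSpace ℝ (Fin n))
    (hx : affineSpan ℝ (Set.range x) = ⊤) :
    N - n ≤ {S : Finset (Fin N) | S.card = n + 1 ∧ affineSpan ℝ (x '' ↑S) = ⊤}.ncard := by
  classical
  obtain ⟨t, hts, htspan, htind⟩ :=
    exists_affineIndependent ℝ (EuclideanSpace ℝ (Fin n)) (Set.range x)
  rw [hx] at htspan
  have htfin : t.Finite := (Set.finite_range x).subset hts
  haveI : Fintype t := htfin.fintype
  have hgex : ∀ p : t, ∃ i, x i = (p : EuclideanSpace ℝ (Fin n)) := fun p => hts p.2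
  choose g hg using hgex
  have hginj : Function.Injective g := by
    intro p q hpq
    have : (p : EuclideanSpace ℝ (Fin n)) = q := by rw [← hg p, ← hg q, hpq]
    exact Subtype.ext this
  set T : Finset (Fin N) := Finset.univ.image g with hT
  have hmemT : ∀ j ∈ T, x j ∈ t := by
    intro j hj
    obtain ⟨p, _, rfl⟩ := Finset.mem_image.1 hj
    rw [hg p]; exact p.2
  have hxT : x '' ↑T = t := by
    ext y
    constructor
    · rintro ⟨j, hj, rfl⟩
      exact hmemT j hj
    · intro hy
      exact ⟨g ⟨y, hy⟩, Finset.mem_image.2 ⟨⟨y, hy⟩, Finset.mem_univ _, rfl⟩, hg _⟩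
  have hcardt : Fintype.card t = n + 1 := by
    have h1 := htind.affineSpan_eq_top_iff_card_eq_finrank_add_one.mp
      (by rw [Subtype.range_coe]; exact htspan)
    rwa [finrank_euclideanSpace_fin] at h1
  have hTcard : T.card = n + 1 := by
    rw [hT, Finset.card_image_of_injective _ hginj, Finset.card_univ, hcardt]
  have hTind : AffineIndependent ℝ (fun j : T => x j) := by
    have hinj2 : ∀ j₁ j₂ : T, x (j₁ : Fin N) = x (j₂ : Fin N) → j₁ = j₂ := by
      rintro ⟨j₁, hj₁⟩ ⟨j₂, hj₂⟩ h
      obtain ⟨p₁, _, rfl⟩ := Finset.mem_image.1 hj₁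
      obtain ⟨p₂, _, rfl⟩ := Finset.mem_image.1 hj₂
      simp only [hg] at h
      have : p₁ = p₂ := Subtype.ext h
      subst this
      rfl
    let e : T ↪ t := ⟨fun j => ⟨x j, hmemT j j.2⟩, by
      intro j₁ j₂ h
      exact hinj2 j₁ j₂ (by simpa using congrArg Subtype.val h)⟩
    have : (fun j : T => x j) = ((↑) : t → EuclideanSpace ℝ (Fin n)) ∘ e := rfl
    rw [this]
    exact htind.comp_embedding e
  have hTspan : affineSpan ℝ (x '' ↑T) = ⊤ := by rw [hxT]; exact htspan
  have hex : ∀ i ∉ T, ∃ S : Finset (Fin N), i ∈ S ∧ S ⊆ insert i T ∧ S.card = T.card ∧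
      affineSpan ℝ (x '' ↑S) = ⊤ := fun i hi => exchange_lemma x T hTind hTspan i hi
  set f : Fin N → Finset (Fin N) :=
    fun i => if h : i ∈ T then T else (hex i h).choose with hf
  have hfi : ∀ i ∉ T, i ∈ f i ∧ f i ⊆ insert i T ∧ (f i).card = n + 1 ∧
      affineSpan ℝ (x '' ↑(f i)) = ⊤ := by
    intro i hi
    have := (hex i hi).choose_spec
    rw [hf]
    simp only [dif_neg hi]
    exact ⟨this.1, this.2.1, by rw [this.2.2.1, hTcard], this.2.2.2⟩
  set 𝒜 : Finset (Finset (Fin N)) := insert T ((Finset.univ \ T).image f) with h𝒜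
  have hsub : (↑𝒜 : Set (Finset (Fin N))) ⊆
      {S : Finset (Fin N) | S.card = n + 1 ∧ affineSpan ℝ (x '' ↑S) = ⊤} := by
    intro S hS
    simp only [h𝒜, Finset.coe_insert, Set.mem_insert_iff, Finset.coe_image,
      Set.mem_image] at hS
    rcases hS with rfl | ⟨i, hi, rfl⟩
    · exact ⟨hTcard, hTspan⟩
    · have hi' : i ∉ T := by
        simp only [Finset.coe_sdiff, Set.mem_diff, Finset.mem_coe] at hi
        exact hi.2
      obtain ⟨_, _, h3, h4⟩ := hfi i hi'
      exact ⟨h3, h4⟩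
  have hTnot : T ∉ (Finset.univ \ T).image f := by
    intro h
    obtain ⟨i, hi, hfiT⟩ := Finset.mem_image.1 h
    have hi' : i ∉ T := (Finset.mem_sdiff.1 hi).2
    obtain ⟨h1, _, _, _⟩ := hfi i hi'
    rw [hfiT] at h1
    exact hi' h1
  have hinjf : Set.InjOn f ↑(Finset.univ \ T) := by
    intro i hi i' hi' hii'
    have hiT : i ∉ T := (Finset.mem_sdiff.1 hi).2
    have hiT' : i' ∉ T := (Finset.mem_sdiff.1 hi').2
    obtain ⟨h1, _, _, _⟩ := hfi i hiT
    obtain ⟨_, h2', _, _⟩ := hfi i' hiT'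
    rw [hii'] at h1
    rcases Finset.mem_insert.1 (h2' h1) with h | h
    · exact h
    · exact absurd h hiT
  have hcard𝒜 : 𝒜.card = N - n := by
    rw [h𝒜, Finset.card_insert_of_notMem hTnot, Finset.card_image_of_injOn hinjf,
      Finset.card_sdiff_of_subset (Finset.subset_univ T), Finset.card_univ, Fintype.card_fin, hTcard]
    omega
  calc N - n = 𝒜.card := hcard𝒜.symm
    _ = (↑𝒜 : Set (Finset (Fin N))).ncard := (Set.ncard_coe_finset 𝒜).symm
    _ ≤ _ := Set.ncard_le_ncard hsub (Set.toFinite _)
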